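/- arXiv:2310.17759 — 2 statements merged into one kernel-verified Lean document; each statement's English description precedes it below -/
import Mathlib

section
/- Let E and E' be real Hilbert spaces, X ⊆ E and Y ⊆ E' nonempty convex sets, and F : E × E' → ℝ a differentiable function that is convex-concave on X × Y, with saddle operator G(x,y) = (∇_x F(x,y), −∇_y F(x,y)). Let α > 0, ε̂ ≥ 0, T ≥ 1, and let z₀, z₁, …, z_T ∈ X × Y be points such that for each t = 0, …, T−1, ⟪G(z_{t+1}) + (1/α)·(z_{t+1} − z_t), z_{t+1} − z⟫ ≤ ε̂ for every z ∈ X × Y. Let (x̄_{T+1}, ȳ_{T+1}) = (1/T)·Σ_{t=0}^{T−1} z_{t+1}. Then for every z = (x, y) ∈ X × Y: F(x̄_{T+1}, y) − F(x, ȳ_{T+1}) ≤ ‖z₀ − z‖²/(2αT) + ε̂. -/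
open RealInnerProductSpace

noncomputable section

variable {E E' : Type*} [NormedAddCommGroup E] [InnerProductSpace ℝ E] [CompleteSpace E]
  [NormedAddCommGroup E'] [InnerProductSpace ℝ E'] [CompleteSpace E']

/-- The saddle operator `G(x,y) = (∇ₓ F(x,y), −∇_y F(x,y))` on the Hilbert product
`WithLp 2 (E × E')`. -/
def saddleOp (F : E × E' → ℝ) (z : WithLp 2 (E × E')) : WithLp 2 (E × E') :=
  (WithLp.equiv 2 (E × E')).symm
    (gradient (fun u => F (u, (WithLp.equiv 2 (E × E') z).2)) (WithLp.equiv 2 (E × E') z).1,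
     -gradient (fun v => F ((WithLp.equiv 2 (E × E') z).1, v)) (WithLp.equiv 2 (E × E') z).2)

/-- `X × Y` as a subset of the Hilbert product. -/
def prodSet (X : Set E) (Y : Set E') : Set (WithLp 2 (E × E')) :=
  (WithLp.equiv 2 (E × E')) ⁻¹' (X ×ˢ Y)

lemma convexOn_grad_ineq' {H : Type*} [NormedAddCommGroup H] [InnerProductSpace ℝ H]
    [CompleteSpace H] {f : H → ℝ} {s : Set H} (hf : ConvexOn ℝ s f) {a b : H}
    (ha : a ∈ s) (hb : b ∈ s) (hd : DifferentiableAt ℝ f a) :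
    ⟪gradient f a, b - a⟫ ≤ f b - f a := by
  set A : ℝ →ᵃ[ℝ] H := AffineMap.lineMap a b with hA
  have hg : ConvexOn ℝ (A ⁻¹' s) (f ∘ A) := hf.comp_affineMap A
  have h0 : (0:ℝ) ∈ A ⁻¹' s := by simp [hA, ha]
  have h1 : (1:ℝ) ∈ A ⁻¹' s := by simp [hA, hb]
  have hline : HasDerivAt (fun t : ℝ => A t) (b - a) 0 := by
    have hfun : (fun t : ℝ => A t) = fun t : ℝ => t • (b - a) + a := by
      funext t; simp [hA, AffineMap.lineMap_apply, vsub_eq_sub, vadd_eq_add]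
    rw [hfun]
    simpa using ((hasDerivAt_id (0:ℝ)).smul_const (b - a)).add_const a
  have hfd : HasFDerivAt f (InnerProductSpace.toDual ℝ H (gradient f a)) (A 0) := by
    have hA0 : A 0 = a := by simp [hA]
    rw [hA0]
    exact hasGradientAt_iff_hasFDerivAt.mp hd.hasGradientAt
  have hcomp : HasDerivAt (f ∘ A) ⟪gradient f a, b - a⟫ 0 := by
    simpa [InnerProductSpace.toDual_apply_apply] using hfd.comp_hasDerivAt 0 hline
  have hs := hg.le_slope_of_hasDerivAt h0 h1 one_pos hcomp
  rw [slope_def_field] at hs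
  simpa [hA, Function.comp] using hs

lemma concaveOn_grad_ineq' {H : Type*} [NormedAddCommGroup H] [InnerProductSpace ℝ H]
    [CompleteSpace H] {f : H → ℝ} {s : Set H} (hf : ConcaveOn ℝ s f) {a b : H}
    (ha : a ∈ s) (hb : b ∈ s) (hd : DifferentiableAt ℝ f a) :
    f b - f a ≤ ⟪gradient f a, b - a⟫ := by
  set A : ℝ →ᵃ[ℝ] H := AffineMap.lineMap a b with hA
  have hg : ConcaveOn ℝ (A ⁻¹' s) (f ∘ A) := hf.comp_affineMap A
  have h0 : (0:ℝ) ∈ A ⁻¹' s := by simp [hA, ha]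
  have h1 : (1:ℝ) ∈ A ⁻¹' s := by simp [hA, hb]
  have hline : HasDerivAt (fun t : ℝ => A t) (b - a) 0 := by
    have hfun : (fun t : ℝ => A t) = fun t : ℝ => t • (b - a) + a := by
      funext t; simp [hA, AffineMap.lineMap_apply, vsub_eq_sub, vadd_eq_add]
    rw [hfun]
    simpa using ((hasDerivAt_id (0:ℝ)).smul_const (b - a)).add_const a
  have hfd : HasFDerivAt f (InnerProductSpace.toDual ℝ H (gradient f a)) (A 0) := by
    have hA0 : A 0 = a := by simp [hA]
    rw [hA0]
    exact hasGradientAt_iff_hasFDerivAt.mp hd.hasGradientAt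
  have hcomp : HasDerivAt (f ∘ A) ⟪gradient f a, b - a⟫ 0 := by
    simpa [InnerProductSpace.toDual_apply_apply] using hfd.comp_hasDerivAt 0 hline
  have hs := hg.slope_le_of_hasDerivAt h0 h1 one_pos hcomp
  rw [slope_def_field] at hs
  simpa [hA, Function.comp] using hs

/-- Lemma D.1: convergence of the inexact proximal point method.
If each proximal sub-problem is solved to variational-inequality accuracy `ε̂`, i.e.
`⟪G(z_{t+1}) + (1/α)(z_{t+1} − z_t), z_{t+1} − z⟫ ≤ ε̂` for all `z ∈ X × Y`, then the
averaged iterate satisfies `F(x̄_{T+1}, y) − F(x, ȳ_{T+1}) ≤ ‖z₀ − z‖²/(2αT) + ε̂`. -/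
theorem inexact_ppm_convergence
    (X : Set E) (Y : Set E') (hXne : X.Nonempty) (hYne : Y.Nonempty)
    (hXcv : Convex ℝ X) (hYcv : Convex ℝ Y)
    (F : E × E' → ℝ) (hFdiff : Differentiable ℝ F)
    (hcvx : ∀ y ∈ Y, ConvexOn ℝ X (fun x => F (x, y)))
    (hccv : ∀ x ∈ X, ConcaveOn ℝ Y (fun y => F (x, y)))
    (α εh : ℝ) (hα : 0 < α) (hεh : 0 ≤ εh)
    (T : ℕ) (hT : 1 ≤ T)
    (z : ℕ → WithLp 2 (E × E')) (hzS : ∀ t ≤ T, z t ∈ prodSet X Y)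
    (hsub : ∀ t < T, ∀ w ∈ prodSet X Y,
      ⟪saddleOp F (z (t + 1)) + (1 / α) • (z (t + 1) - z t), z (t + 1) - w⟫ ≤ εh) :
    ∀ x ∈ X, ∀ y ∈ Y,
      F ((WithLp.equiv 2 (E × E') ((T : ℝ)⁻¹ • ∑ t ∈ Finset.range T, z (t + 1))).1, y) -
        F (x, (WithLp.equiv 2 (E × E') ((T : ℝ)⁻¹ • ∑ t ∈ Finset.range T, z (t + 1))).2) ≤
      ‖z 0 - (WithLp.equiv 2 (E × E')).symm (x, y)‖ ^ 2 / (2 * α * T) + εh := by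
  intro x hx y hy
  set w : WithLp 2 (E × E') := (WithLp.equiv 2 (E × E')).symm (x, y) with hw
  have hwS : w ∈ prodSet X Y := ⟨hx, hy⟩
  have hTpos : (0:ℝ) < T := by exact_mod_cast Nat.lt_of_lt_of_le Nat.zero_lt_one hT
  -- per-step estimate
  have key : ∀ t < T, F ((z (t+1)).fst, y) - F (x, (z (t+1)).snd)
      ≤ εh + (1/(2*α)) * (‖z t - w‖^2 - ‖z (t+1) - w‖^2) := by
    intro t ht
    set p := z (t+1) with hp
    have hpS : p ∈ prodSet X Y := hzS (t+1) (by omega)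
    have hpX : p.fst ∈ X := hpS.1
    have hpY : p.snd ∈ Y := hpS.2
    have hdx : DifferentiableAt ℝ (fun u => F (u, p.snd)) p.fst :=
      (hFdiff _).comp _ (differentiableAt_id.prodMk (differentiableAt_const _))
    have hdy : DifferentiableAt ℝ (fun v => F (p.fst, v)) p.snd :=
      (hFdiff _).comp _ ((differentiableAt_const _).prodMk differentiableAt_id)
    have h1 : ⟪gradient (fun u => F (u, p.snd)) p.fst, x - p.fst⟫
        ≤ F (x, p.snd) - F (p.fst, p.snd) :=
      convexOn_grad_ineq' (hcvx p.snd hpY) hpX hx hdx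
    have h2 : F (p.fst, y) - F (p.fst, p.snd)
        ≤ ⟪gradient (fun v => F (p.fst, v)) p.snd, y - p.snd⟫ :=
      concaveOn_grad_ineq' (hccv p.fst hpX) hpY hy hdy
    have hsub' := hsub t ht w hwS
    rw [← hp] at hsub'
    rw [inner_add_left, real_inner_smul_left] at hsub'
    have hsplit : ⟪saddleOp F p, p - w⟫
        = -⟪gradient (fun u => F (u, p.snd)) p.fst, x - p.fst⟫
          + ⟪gradient (fun v => F (p.fst, v)) p.snd, y - p.snd⟫ := by
      have : ⟪saddleOp F p, p - w⟫
          = ⟪gradient (fun u => F (u, p.snd)) p.fst, p.fst - x⟫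
            + ⟪-gradient (fun v => F (p.fst, v)) p.snd, p.snd - y⟫ :=
        WithLp.prod_inner_apply _ _
      rw [this, inner_neg_left, ← neg_sub x p.fst, ← neg_sub y p.snd,
        inner_neg_right, inner_neg_right]
      ring
    -- three point identity
    have hid : 2 * ⟪p - z t, p - w⟫ = ‖p - z t‖^2 + ‖p - w‖^2 - ‖z t - w‖^2 := by
      have h3 : z t - w = (z t - p) + (p - w) := by abel
      have h4 := norm_add_sq_real (z t - p) (p - w)
      rw [← h3] at h4
      have h5 : ⟪z t - p, p - w⟫ = - ⟪p - z t, p - w⟫ := by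
        rw [← neg_sub p (z t), inner_neg_left]
      have h6 : ‖z t - p‖ = ‖p - z t‖ := norm_sub_rev _ _
      rw [h5, h6] at h4
      linarith
    have hnn : (0:ℝ) ≤ ‖p - z t‖^2 := sq_nonneg _
    have hαpos : (0:ℝ) < 1/α := by positivity
    have hI : (‖p - w‖^2 - ‖z t - w‖^2)/2 ≤ ⟪p - z t, p - w⟫ := by linarith
    have hmul : (1/α) * ((‖p - w‖^2 - ‖z t - w‖^2)/2) ≤ (1/α) * ⟪p - z t, p - w⟫ :=
      mul_le_mul_of_nonneg_left hI hαpos.le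
    have hhalf : (1/α) * ((‖p - w‖^2 - ‖z t - w‖^2)/2)
        = -(1/(2*α)) * (‖z t - w‖^2 - ‖p - w‖^2) := by ring
    rw [hsplit] at hsub'
    rw [hhalf] at hmul
    linarith
  -- sum the per-step estimates, telescoping
  have hsum : ∑ t ∈ Finset.range T, (F ((z (t+1)).fst, y) - F (x, (z (t+1)).snd))
      ≤ T * εh + (1/(2*α)) * ‖z 0 - w‖^2 := by
    have h1 : ∑ t ∈ Finset.range T, (F ((z (t+1)).fst, y) - F (x, (z (t+1)).snd))
        ≤ ∑ t ∈ Finset.range T, (εh + (1/(2*α)) * (‖z t - w‖^2 - ‖z (t+1) - w‖^2)) :=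
      Finset.sum_le_sum fun t ht => key t (Finset.mem_range.mp ht)
    have h2 : ∑ t ∈ Finset.range T, (εh + (1/(2*α)) * (‖z t - w‖^2 - ‖z (t+1) - w‖^2))
        = T * εh + (1/(2*α)) * (‖z 0 - w‖^2 - ‖z T - w‖^2) := by
      rw [Finset.sum_add_distrib, Finset.sum_const, Finset.card_range, ← Finset.mul_sum,
        Finset.sum_range_sub' (fun t => ‖z t - w‖^2) T]
      push_cast; ring
    have h3 : (0:ℝ) ≤ ‖z T - w‖^2 := sq_nonneg _
    have h4 : (0:ℝ) ≤ 1/(2*α) := by positivity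
    nlinarith
  -- Jensen
  set zbar : WithLp 2 (E × E') := (T : ℝ)⁻¹ • ∑ t ∈ Finset.range T, z (t + 1) with hzbar
  let φ : WithLp 2 (E × E') →ₗ[ℝ] E :=
    (LinearMap.fst ℝ E E').comp (WithLp.linearEquiv 2 ℝ (E × E')).toLinearMap
  let ψ : WithLp 2 (E × E') →ₗ[ℝ] E' :=
    (LinearMap.snd ℝ E E').comp (WithLp.linearEquiv 2 ℝ (E × E')).toLinearMap
  have hwt0 : ∀ i ∈ Finset.range T, (0:ℝ) ≤ (T:ℝ)⁻¹ := fun i _ => by positivity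
  have hwt1 : ∑ _i ∈ Finset.range T, (T:ℝ)⁻¹ = 1 := by
    rw [Finset.sum_const, Finset.card_range, nsmul_eq_mul]
    field_simp
  have hfst : zbar.fst = ∑ t ∈ Finset.range T, (T:ℝ)⁻¹ • (z (t+1)).fst := by
    have : zbar.fst = φ zbar := rfl
    rw [this, hzbar, map_smul, map_sum, Finset.smul_sum]
    rfl
  have hsnd : zbar.snd = ∑ t ∈ Finset.range T, (T:ℝ)⁻¹ • (z (t+1)).snd := by
    have : zbar.snd = ψ zbar := rfl
    rw [this, hzbar, map_smul, map_sum, Finset.smul_sum]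
    rfl
  have hJ1 : F (zbar.fst, y) ≤ ∑ t ∈ Finset.range T, (T:ℝ)⁻¹ • F ((z (t+1)).fst, y) := by
    rw [hfst]
    exact (hcvx y hy).map_sum_le hwt0 hwt1 fun i hi => (hzS (i+1) (by
      have := Finset.mem_range.mp hi; omega)).1
  have hJ2 : ∑ t ∈ Finset.range T, (T:ℝ)⁻¹ • F (x, (z (t+1)).snd) ≤ F (x, zbar.snd) := by
    rw [hsnd]
    exact (hccv x hx).le_map_sum hwt0 hwt1 fun i hi => (hzS (i+1) (by
      have := Finset.mem_range.mp hi; omega)).2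
  have hdiff : ∑ t ∈ Finset.range T, (T:ℝ)⁻¹ • F ((z (t+1)).fst, y)
        - ∑ t ∈ Finset.range T, (T:ℝ)⁻¹ • F (x, (z (t+1)).snd)
      = (T:ℝ)⁻¹ * ∑ t ∈ Finset.range T, (F ((z (t+1)).fst, y) - F (x, (z (t+1)).snd)) := by
    rw [Finset.mul_sum, ← Finset.sum_sub_distrib]
    congr 1; funext t; simp [smul_eq_mul]; ring
  have hTinv : (0:ℝ) ≤ (T:ℝ)⁻¹ := by positivity
  have hfinal : (T:ℝ)⁻¹ * ∑ t ∈ Finset.range T, (F ((z (t+1)).fst, y) - F (x, (z (t+1)).snd))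
      ≤ ‖z 0 - w‖^2 / (2*α*T) + εh := by
    have := mul_le_mul_of_nonneg_left hsum hTinv
    have heq : (T:ℝ)⁻¹ * ((T:ℝ) * εh + 1/(2*α) * ‖z 0 - w‖^2)
        = ‖z 0 - w‖^2 / (2*α*T) + εh := by
      field_simp
      ring
    linarith
  show F (zbar.fst, y) - F (x, zbar.snd) ≤ ‖z 0 - w‖^2 / (2*α*T) + εh
  linarith [hJ1, hJ2, hdiff.ge, hdiff.le, hfinal]
end
end

section
/- Let E and E' be real Hilbert spaces, X ⊆ E and Y ⊆ E' nonempty closed convex sets each of diameter at most D, and F : E × E' → ℝ a differentiable function that is convex-concave on X × Y and whose saddle operator G(x,y) = (∇_x F(x,y), −∇_y F(x,y)) is ℓ-Lipschitz on X × Y. Let ε > 0, δ ≥ 0, set r = ε/D² and ε_r = ε·min{1, δ²/(8D²)}, and fix z₀, z₀' ∈ X × Y with ‖z₀ − z₀'‖ ≤ δ. Suppose z_r = (x_r, y_r) ∈ X × Y satisfies ⟪G(z_r) + r·(z_r − z₀), z_r − z⟫ ≤ ε_r for every z ∈ X × Y, and z_r' = (x_r', y_r') ∈ X × Y satisfies ⟪G(z_r')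 + r·(z_r' − z₀'), z_r' − z⟫ ≤ ε_r for every z ∈ X × Y. Then F(x_r, y) − F(x, y_r) ≤ 2ε for every (x, y) ∈ X × Y, and ‖z_r − z_r'‖² ≤ 4δ². -/
open RealInnerProductSpace

noncomputable section

variable {E E' : Type*} [NormedAddCommGroup E] [InnerProductSpace ℝ E] [CompleteSpace E]
  [NormedAddCommGroup E'] [InnerProductSpace ℝ E'] [CompleteSpace E']

section Aux
open Set Filter Topology

variable {G : Type*} [NormedAddCommGroup G] [InnerProductSpace ℝ G] [CompleteSpace G]

lemma inner_gradient_eq' {f : G → ℝ} (x v : G) :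
    ⟪gradient f x, v⟫ = fderiv ℝ f x v := by
  rw [gradient, InnerProductSpace.toDual_symm_apply]

lemma grad_ineq_convex' {f : G → ℝ} {X : Set G} (hcf : ConvexOn ℝ X f)
    {x u : G} (hx : x ∈ X) (hu : u ∈ X) (hdf : DifferentiableAt ℝ f x) :
    f x + ⟪gradient f x, u - x⟫ ≤ f u := by
  set d := u - x with hd
  have hline : HasDerivAt (fun t : ℝ => x + t • d) d 0 := by
    simpa using (((hasDerivAt_id (0:ℝ)).smul_const d).const_add x)
  have hf' : HasFDerivAt f (fderiv ℝ f x) ((fun t : ℝ => x + t • d) 0) := by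
    simpa using hdf.hasFDerivAt
  have hcomp : HasDerivAt (fun t : ℝ => f (x + t • d)) (fderiv ℝ f x d) 0 := by
    have := hf'.comp_hasDerivAt 0 hline
    exact this
  set g : ℝ → ℝ := fun t => f (x + t • d) with hg
  have htend : Tendsto (slope g 0) (𝓝[>] (0:ℝ)) (𝓝 (fderiv ℝ f x d)) :=
    (hasDerivAt_iff_tendsto_slope.mp hcomp).mono_left
      (nhdsWithin_mono _ (fun t ht => ne_of_gt ht))
  have hbound : ∀ᶠ t in 𝓝[>] (0:ℝ), slope g 0 t ≤ f u - f x := by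
    filter_upwards [Ioc_mem_nhdsGT (by norm_num : (0:ℝ) < 1)] with t ht
    have ht0 : 0 < t := ht.1
    have ht1 : t ≤ 1 := ht.2
    have hcv := hcf.2 hx hu (by linarith : (0:ℝ) ≤ 1 - t) (le_of_lt ht0) (by ring)
    have hpt : (1 - t) • x + t • u = x + t • d := by
      rw [hd]; module
    rw [hpt] at hcv
    have hg0 : g 0 = f x := by simp [hg]
    rw [slope_def_field, hg0, sub_zero, div_le_iff₀ ht0]
    calc g t - f x ≤ ((1 - t) * f x + t * f u) - f x := by
          simpa [hg] using sub_le_sub_right hcv (f x)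
      _ = (f u - f x) * t := by ring
  have hfin : fderiv ℝ f x d ≤ f u - f x :=
    le_of_tendsto htend hbound
  rw [inner_gradient_eq']
  linarith

lemma grad_ineq_concave' {f : G → ℝ} {X : Set G} (hcf : ConcaveOn ℝ X f)
    {x u : G} (hx : x ∈ X) (hu : u ∈ X) (hdf : DifferentiableAt ℝ f x) :
    f u ≤ f x + ⟪gradient f x, u - x⟫ := by
  have hneg : ConvexOn ℝ X (fun e => -(f e)) := hcf.neg
  have hdn : DifferentiableAt ℝ (fun e => -(f e)) x := hdf.neg
  have h := grad_ineq_convex' hneg hx hu hdn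
  have hginner : ⟪gradient (fun e => -(f e)) x, u - x⟫ = -⟪gradient f x, u - x⟫ := by
    rw [inner_gradient_eq', inner_gradient_eq']
    have : fderiv ℝ (fun e => -(f e)) x = -(fderiv ℝ f x) := by
      simpa using fderiv_neg (𝕜 := ℝ) (f := f) (x := x)
    simp [this]
  rw [hginner] at h
  linarith

end Aux

set_option maxHeartbeats 1000000 in
/-- Theorem 4.5: regularized minimax framework under the δ-inexact
initialization oracle.  With `r = ε/D²` and `ε_r = ε·min{1, δ²/(8D²)}`, if `z_r` solves the
regularized problem with center `z₀` to variational-inequality accuracy `ε_r`, and `z_r'` the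
one with center `z₀'` where `‖z₀ − z₀'‖ ≤ δ`, then the duality gap of `z_r` is at most `2ε`
and `‖z_r − z_r'‖² ≤ 4δ²`. -/
theorem regularized_minimax_inexact_init
    (X : Set E) (Y : Set E') (hXne : X.Nonempty) (hYne : Y.Nonempty)
    (hXcl : IsClosed X) (hYcl : IsClosed Y) (hXcv : Convex ℝ X) (hYcv : Convex ℝ Y)
    (D : ℝ) (hD : 0 < D)
    (hXD : ∀ s₁ ∈ X, ∀ s₂ ∈ X, ‖s₁ - s₂‖ ≤ D) (hYD : ∀ s₁ ∈ Y, ∀ s₂ ∈ Y, ‖s₁ - s₂‖ ≤ D)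
    (F : E × E' → ℝ) (hFdiff : Differentiable ℝ F)
    (hcvx : ∀ y ∈ Y, ConvexOn ℝ X (fun x => F (x, y)))
    (hccv : ∀ x ∈ X, ConcaveOn ℝ Y (fun y => F (x, y)))
    (ℓ : ℝ) (hℓ : 0 < ℓ)
    (hlip : ∀ z₁ ∈ prodSet X Y, ∀ z₂ ∈ prodSet X Y,
      ‖saddleOp F z₁ - saddleOp F z₂‖ ≤ ℓ * ‖z₁ - z₂‖)
    (ε δ : ℝ) (hε : 0 < ε) (hδ : 0 ≤ δ)
    (r εr : ℝ) (hr : r = ε / D ^ 2) (hεr : εr = ε * min 1 (δ ^ 2 / (8 * D ^ 2)))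
    (z₀ z₀' : WithLp 2 (E × E')) (hz₀ : z₀ ∈ prodSet X Y) (hz₀' : z₀' ∈ prodSet X Y)
    (hdev : ‖z₀ - z₀'‖ ≤ δ)
    (zr zr' : WithLp 2 (E × E')) (hzrS : zr ∈ prodSet X Y) (hzr'S : zr' ∈ prodSet X Y)
    (hzr : ∀ z ∈ prodSet X Y, ⟪saddleOp F zr + r • (zr - z₀), zr - z⟫ ≤ εr)
    (hzr' : ∀ z ∈ prodSet X Y, ⟪saddleOp F zr' + r • (zr' - z₀'), zr' - z⟫ ≤ εr) :
    (∀ x ∈ X, ∀ y ∈ Y,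
      F ((WithLp.equiv 2 (E × E') zr).1, y) - F (x, (WithLp.equiv 2 (E × E') zr).2) ≤ 2 * ε) ∧
    ‖zr - zr'‖ ^ 2 ≤ 4 * δ ^ 2 := by
  have hD2 : (0:ℝ) < D ^ 2 := by positivity
  have hrpos : 0 < r := by rw [hr]; positivity
  have hrD : r * D ^ 2 = ε := by rw [hr]; field_simp
  have hεrε : εr ≤ ε := by
    rw [hεr]
    calc ε * min 1 (δ ^ 2 / (8 * D ^ 2)) ≤ ε * 1 :=
          mul_le_mul_of_nonneg_left (min_le_left _ _) hε.le
      _ = ε := mul_one ε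
  -- differentiability of partial maps
  have hdx : ∀ (b : E') (a : E), DifferentiableAt ℝ (fun u : E => F (u, b)) a := fun b a =>
    (hFdiff (a, b)).comp a (differentiableAt_id.prodMk (differentiableAt_const b))
  have hdy : ∀ (a : E) (b : E'), DifferentiableAt ℝ (fun v : E' => F (a, v)) b := fun a b =>
    (hFdiff (a, b)).comp b ((differentiableAt_const a).prodMk differentiableAt_id)
  -- inner product with the saddle operator
  have hsad : ∀ z w : WithLp 2 (E × E'),
      ⟪saddleOp F z, w⟫ =
        ⟪gradient (fun u => F (u, z.snd)) z.fst, w.fst⟫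
        - ⟪gradient (fun v => F (z.fst, v)) z.snd, w.snd⟫ := by
    intro z w
    rw [WithLp.prod_inner_apply]
    simp only [saddleOp, WithLp.equiv_apply, WithLp.equiv_symm_apply, WithLp.toLp_fst,
      WithLp.toLp_snd, WithLp.ofLp_fst, WithLp.ofLp_snd, inner_neg_left]
    ring
  obtain ⟨hxr, hyr⟩ : zr.fst ∈ X ∧ zr.snd ∈ Y := id hzrS
  obtain ⟨hxr', hyr'⟩ : zr'.fst ∈ X ∧ zr'.snd ∈ Y := id hzr'S
  obtain ⟨hx₀, hy₀⟩ : z₀.fst ∈ X ∧ z₀.snd ∈ Y := id hz₀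
  constructor
  · -- Part 1: duality gap
    intro x hx y hy
    set z : WithLp 2 (E × E') := (WithLp.equiv 2 (E × E')).symm (x, y) with hzdef
    have hzS : z ∈ prodSet X Y := by
      show ((x, y) : E × E') ∈ X ×ˢ Y
      exact ⟨hx, hy⟩
    have h := hzr z hzS
    rw [inner_add_left, real_inner_smul_left, hsad] at h
    -- gradient inequalities at zr
    have gx := grad_ineq_convex' (hcvx zr.snd hyr) hxr hx (hdx zr.snd zr.fst)
    have gy := grad_ineq_concave' (hccv zr.fst hxr) hyr hy (hdy zr.fst zr.snd)
    -- components of zr - z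
    have hfst : (zr - z).fst = zr.fst - x := rfl
    have hsnd : (zr - z).snd = zr.snd - y := rfl
    rw [hfst, hsnd] at h
    -- polarization / diameter bound on ⟪zr - z₀, zr - z⟫
    have hnormsq : ‖z₀ - z‖ ^ 2 ≤ 2 * D ^ 2 := by
      have hdec : ‖z₀ - z‖ ^ 2 = ‖z₀.fst - x‖ ^ 2 + ‖z₀.snd - y‖ ^ 2 :=
        WithLp.prod_norm_sq_eq_of_L2 (z₀ - z)
      have h1 : ‖z₀.fst - x‖ ≤ D := hXD _ hx₀ _ hx
      have h2 : ‖z₀.snd - y‖ ≤ D := hYD _ hy₀ _ hy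
      nlinarith [norm_nonneg (z₀.fst - x), norm_nonneg (z₀.snd - y)]
    have hpol : ⟪zr - z₀, zr - z⟫ ≥ -(D ^ 2) := by
      have hnorm := norm_add_sq_real (z₀ - zr) (zr - z)
      have hsum : z₀ - zr + (zr - z) = z₀ - z := by abel
      rw [hsum] at hnorm
      have hneg : ⟪zr - z₀, zr - z⟫ = -⟪z₀ - zr, zr - z⟫ := by
        rw [show zr - z₀ = -(z₀ - zr) by abel, inner_neg_left]
      rw [hneg]
      nlinarith [sq_nonneg ‖z₀ - zr‖, sq_nonneg ‖zr - z‖]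
    -- combine
    have hgap : F (zr.fst, y) - F (x, zr.snd) ≤
        ⟪gradient (fun u => F (u, zr.snd)) zr.fst, zr.fst - x⟫
        - ⟪gradient (fun v => F (zr.fst, v)) zr.snd, zr.snd - y⟫ := by
      have e1 : ⟪gradient (fun u => F (u, zr.snd)) zr.fst, x - zr.fst⟫
          = -⟪gradient (fun u => F (u, zr.snd)) zr.fst, zr.fst - x⟫ := by
        rw [show x - zr.fst = -(zr.fst - x) by abel, inner_neg_right]
      have e2 : ⟪gradient (fun v => F (zr.fst, v)) zr.snd, y - zr.snd⟫
          = -⟪gradient (fun v => F (zr.fst, v)) zr.snd, zr.snd - y⟫ := by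
        rw [show y - zr.snd = -(zr.snd - y) by abel, inner_neg_right]
      rw [e1] at gx; rw [e2] at gy
      linarith
    have hrmul : r * ⟪zr - z₀, zr - z⟫ ≥ -(r * D ^ 2) := by
      have := mul_le_mul_of_nonneg_left hpol hrpos.le
      nlinarith
    show F (zr.fst, y) - F (x, zr.snd) ≤ 2 * ε
    linarith [hgap, h, hrmul, hεrε, hrD.ge, hrD.le]
  · -- Part 2: stability
    set w : WithLp 2 (E × E') := zr - zr' with hwdef
    -- monotonicity of the saddle operator
    have mono : 0 ≤ ⟪saddleOp F zr - saddleOp F zr', w⟫ := by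
      have A := grad_ineq_convex' (hcvx zr.snd hyr) hxr hxr' (hdx zr.snd zr.fst)
      have B := grad_ineq_convex' (hcvx zr'.snd hyr') hxr' hxr (hdx zr'.snd zr'.fst)
      have C := grad_ineq_concave' (hccv zr.fst hxr) hyr hyr' (hdy zr.fst zr.snd)
      have Dd := grad_ineq_concave' (hccv zr'.fst hxr') hyr' hyr (hdy zr'.fst zr'.snd)
      rw [inner_sub_left, hsad, hsad]
      have hfst : w.fst = zr.fst - zr'.fst := rfl
      have hsnd : w.snd = zr.snd - zr'.snd := rfl
      rw [hfst, hsnd]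
      simp only [inner_sub_right] at A B C Dd ⊢
      linarith
    have h1 := hzr zr' hzr'S
    have h2 := hzr' zr hzrS
    rw [inner_add_left, real_inner_smul_left] at h1 h2
    rw [← hwdef] at h1
    have hneg : zr' - zr = -w := by rw [hwdef]; abel
    rw [hneg, inner_neg_right, inner_neg_right] at h2
    rw [inner_sub_left] at mono
    -- decompose ⟪zr - z₀, w⟫
    have hdecomp : zr - z₀ = w + ((z₀' - z₀) + (zr' - z₀')) := by rw [hwdef]; abel
    have hsplit : ⟪zr - z₀, w⟫
        = ⟪w, w⟫ + ⟪z₀' - z₀, w⟫ + ⟪zr' - z₀', w⟫ := by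
      rw [hdecomp, inner_add_left, inner_add_left]; ring
    have hww : ⟪w, w⟫ = ‖w‖ ^ 2 := real_inner_self_eq_norm_sq w
    have hcs : ⟪z₀' - z₀, w⟫ ≥ -(δ * ‖w‖) := by
      have habs := abs_real_inner_le_norm (z₀' - z₀) w
      have hnn : ‖z₀' - z₀‖ ≤ δ := by rwa [norm_sub_rev]
      have : ‖z₀' - z₀‖ * ‖w‖ ≤ δ * ‖w‖ :=
        mul_le_mul_of_nonneg_right hnn (norm_nonneg w)
      cases' abs_le.mp habs with hl hu
      linarith
    -- combine: r * ‖w‖² ≤ 2εr + r * δ * ‖w‖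
    have hmain : r * ‖w‖ ^ 2 ≤ 2 * εr + r * (δ * ‖w‖) := by
      have hsum : r * ⟪zr - z₀, w⟫ - r * ⟪zr' - z₀', w⟫ ≤ 2 * εr := by linarith
      rw [hsplit] at hsum
      have : r * (⟪w, w⟫ + ⟪z₀' - z₀, w⟫) ≤ 2 * εr := by linarith [hsum]
      have hc := mul_le_mul_of_nonneg_left hcs hrpos.le
      nlinarith [hww, hc]
    have hεr2 : εr ≤ r * δ ^ 2 / 8 := by
      have ha : εr ≤ ε * (δ ^ 2 / (8 * D ^ 2)) := by
        rw [hεr]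
        exact mul_le_mul_of_nonneg_left (min_le_right _ _) hε.le
      have hb : ε * (δ ^ 2 / (8 * D ^ 2)) = r * δ ^ 2 / 8 := by
        rw [hr]; field_simp
      linarith
    set t := ‖w‖ with htdef
    have ht0 : 0 ≤ t := norm_nonneg w
    have hquad : t ^ 2 ≤ δ ^ 2 / 4 + δ * t := by
      have : r * t ^ 2 ≤ r * (δ ^ 2 / 4 + δ * t) := by nlinarith [hmain, hεr2]
      exact le_of_mul_le_mul_left (by linarith) hrpos
    show t ^ 2 ≤ 4 * δ ^ 2
    nlinarith [sq_nonneg (t - δ), sq_nonneg δ]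
end
end
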